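/- Let x = (x_1,…,x_R) be a vector of distinct real numbers and c = (c_1,…,c_R) a vector of real numbers with c_n ≠ 0 for all n. Then the eigenvalues of B(x,c), viewed as a complex R×R matrix, are pairwise distinct; equivalently, B(x,c) has R distinct complex eigenvalues (each eigenspace is one-dimensional). -/

import Mathlib

open Polynomial Matrix Complex


/-- The generalized weighted Hilbert matrix `B(x,c)` with entries
`b_{m,n} = c_m c_n / (x_m - x_n)` for `m ≠ n` and `0` on the diagonal. -/
noncomputable def Bmat {R : ℕ} (x c : Fin R → ℝ) : Matrix (Fin R) (Fin R) ℝ :=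
  Matrix.of fun m n => if m = n then 0 else c m * c n / (x m - x n)



lemma charpoly_conj_aux {n : Type*} [DecidableEq n] [Fintype n] {K : Type*} [CommRing K]
    (U V D : Matrix n n K) (hUV : U * V = 1) :
    (U * D * V).charpoly = D.charpoly := by
  have hmap : ∀ M N : Matrix n n K, (M * N).map (C : K → K[X]) = M.map C * N.map C := by
    intro M N
    exact (RingHom.mapMatrix (C : K →+* K[X])).map_mul M N
  have hscalar : Matrix.scalar n (X : K[X]) = U.map C * Matrix.scalar n (X : K[X]) * V.map C := by
    rw [← (Matrix.scalar_commute (X : K[X]) (fun r => Commute.all _ _) (U.map C)).eq, mul_assoc,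
      ← hmap, hUV]
    simp
  have hcm : charmatrix (U * D * V) = U.map C * charmatrix D * V.map C := by
    unfold charmatrix
    rw [RingHom.mapMatrix_apply, RingHom.mapMatrix_apply, hmap, hmap, mul_sub, sub_mul]
    rw [← hscalar]
  have hdet1 : (U.map (C : K → K[X])).det * (V.map C).det = 1 := by
    rw [← det_mul, ← hmap, hUV]; simp
  unfold Matrix.charpoly
  rw [hcm, det_mul, det_mul]
  ring_nf
  rw [mul_comm ((U.map C).det), mul_assoc, hdet1, mul_one]

lemma charpoly_diagonal' {n : Type*} [DecidableEq n] [Fintype n] {K : Type*} [CommRing K]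
    (d : n → K) : (Matrix.diagonal d).charpoly = ∏ i, (X - C (d i)) := by
  have : charmatrix (Matrix.diagonal d) = Matrix.diagonal (fun i => (X : K[X]) - C (d i)) := by
    ext i j
    by_cases h : i = j
    · subst h; simp [charmatrix_apply_eq]
    · rw [charmatrix_apply_ne _ _ _ h, Matrix.diagonal_apply_ne _ h,
        Matrix.diagonal_apply_ne _ h]
      simp
  rw [Matrix.charpoly, this, det_diagonal]

lemma key_lemma {R : ℕ} (x c : Fin R → ℝ) (hx : Function.Injective x) (hc : ∀ n, c n ≠ 0)
    (μ : ℂ) (hμ : (starRingEnd ℂ) μ = -μ) (v : Fin R → ℂ)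
    (heig : ((Bmat x c).map (fun r => (r : ℂ))) *ᵥ v = μ • v)
    (hcv : ∑ n, (c n : ℂ) * v n = 0) : v = 0 := by
  set A : Matrix (Fin R) (Fin R) ℂ := (Bmat x c).map (fun r => (r : ℂ)) with hAdef
  have hA : ∀ m n, A m n = if m = n then 0 else (c m : ℂ) * c n / (x m - x n) := by
    intro m n
    simp only [hAdef, Matrix.map_apply, Bmat, Matrix.of_apply]
    split <;> push_cast <;> simp
  have hAanti : ∀ m n, A n m = -A m n := by
    intro m n
    rw [hA, hA]
    by_cases h : m = n
    · simp [h]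
    · rw [if_neg (Ne.symm h), if_neg h]
      have hd : ((x m : ℂ) - x n) ≠ 0 :=
        sub_ne_zero.2 (fun hh => h (hx (by exact_mod_cast hh)))
      have hd' : ((x n : ℂ) - x m) ≠ 0 :=
        sub_ne_zero.2 (fun hh => (Ne.symm h) (hx (by exact_mod_cast hh)))
      field_simp
      ring
  have hAreal : ∀ m n, (starRingEnd ℂ) (A m n) = A m n := by
    intro m n
    rw [hA]
    split <;> simp [map_div₀]
  have heig' : ∀ m, ∑ n, A m n * v n = μ * v m := by
    intro m
    have := congrFun heig m
    simpa [Matrix.mulVec, dotProduct] using this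
  -- step 1
  have h1 : ∀ m n, ((x m : ℂ) - x n) * A m n = (c m : ℂ) * c n - (if n = m then (c m : ℂ) * c n else 0) := by
    intro m n
    by_cases h : n = m
    · subst h; simp [hA]
    · rw [if_neg h, sub_zero, hA, if_neg (Ne.symm h)]
      rw [mul_comm, div_mul_cancel₀]
      exact sub_ne_zero.2 (fun hh => (Ne.symm h) (hx (by exact_mod_cast hh)))
  have hstep1 : ∀ m, ∑ n, ((x m : ℂ) - x n) * A m n * v n = -((c m : ℂ))^2 * v m := by
    intro m
    have : ∀ n, ((x m : ℂ) - x n) * A m n * v n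
        = (c m : ℂ) * (c n * v n) - (if n = m then (c m : ℂ)^2 * v m else 0) := by
      intro n
      rw [h1]
      by_cases h : n = m
      · subst h; simp; ring
      · simp [h]; ring
    rw [Finset.sum_congr rfl (fun n _ => this n), Finset.sum_sub_distrib,
      ← Finset.mul_sum, Finset.sum_ite_eq' Finset.univ m]
    simp only [Finset.mem_univ, if_true]
    have : ∑ n, (c n : ℂ) * v n = 0 := hcv
    rw [this, mul_zero, zero_sub]
    ring
  -- step 2
  set w : Fin R → ℂ := fun n => (x n : ℂ) * v n with hwdef
  have hstep2 : ∀ m, ∑ n, A m n * w n = μ * x m * v m + (c m : ℂ)^2 * v m := by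
    intro m
    have expand : ∀ n, ((x m : ℂ) - x n) * A m n * v n
        = (x m : ℂ) * (A m n * v n) - A m n * w n := by
      intro n; simp only [hwdef]; ring
    have := hstep1 m
    rw [Finset.sum_congr rfl (fun n _ => expand n), Finset.sum_sub_distrib,
      ← Finset.mul_sum, heig' m] at this
    have h2 : ∑ n, A m n * w n = (x m : ℂ) * (μ * v m) + (c m : ℂ)^2 * v m := by
      linear_combination -this
    rw [h2]; ring
  -- step 3
  have hcol : ∀ n, ∑ m, A m n * (starRingEnd ℂ) (v m) = μ * (starRingEnd ℂ) (v n) := by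
    intro n
    have : ∀ m, A m n * (starRingEnd ℂ) (v m) = -(starRingEnd ℂ) (A n m * v m) := by
      intro m
      rw [_root_.map_mul, hAreal, hAanti]
      ring
    rw [Finset.sum_congr rfl (fun m _ => this m), Finset.sum_neg_distrib,
      ← map_sum, heig' n, _root_.map_mul, hμ]
    ring
  have hS1 : ∑ m, (starRingEnd ℂ) (v m) * (∑ n, A m n * w n)
      = μ * (∑ m, (x m : ℂ) * ((starRingEnd ℂ) (v m) * v m))
        + ∑ m, (c m : ℂ)^2 * ((starRingEnd ℂ) (v m) * v m) := by
    have hterm : ∀ m, (starRingEnd ℂ) (v m) * (∑ n, A m n * w n)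
        = μ * ((x m : ℂ) * ((starRingEnd ℂ) (v m) * v m))
          + (c m : ℂ)^2 * ((starRingEnd ℂ) (v m) * v m) := by
      intro m; rw [hstep2 m]; ring
    rw [Finset.sum_congr rfl (fun m _ => hterm m), Finset.sum_add_distrib, Finset.mul_sum]
  have hS2 : ∑ m, (starRingEnd ℂ) (v m) * (∑ n, A m n * w n)
      = μ * (∑ n, (x n : ℂ) * ((starRingEnd ℂ) (v n) * v n)) := by
    have swap : ∑ m, (starRingEnd ℂ) (v m) * (∑ n, A m n * w n)
        = ∑ n, w n * (∑ m, A m n * (starRingEnd ℂ) (v m)) := by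
      simp only [Finset.mul_sum]
      rw [Finset.sum_comm]
      exact Finset.sum_congr rfl (fun n _ => Finset.sum_congr rfl (fun m _ => by ring))
    rw [swap, Finset.sum_congr rfl (fun n _ => by rw [hcol n]), Finset.mul_sum]
    exact Finset.sum_congr rfl (fun n _ => by simp only [hwdef]; ring)
  have hQ : ∑ m, (c m : ℂ)^2 * ((starRingEnd ℂ) (v m) * v m) = 0 := by
    linear_combination hS1.symm.trans hS2
  -- step 4
  have hre : ∀ m, (starRingEnd ℂ) (v m) * v m = (Complex.normSq (v m) : ℂ) := by
    intro m
    rw [Complex.normSq_eq_conj_mul_self]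
  have hQ' : ∑ m, (c m)^2 * Complex.normSq (v m) = 0 := by
    have hcast : ((∑ m, (c m)^2 * Complex.normSq (v m) : ℝ) : ℂ) = 0 := by
      push_cast
      rw [← hQ]
      exact Finset.sum_congr rfl (fun m _ => by rw [hre m])
    exact_mod_cast hcast
  have hnn : ∀ m ∈ Finset.univ, (0:ℝ) ≤ (c m)^2 * Complex.normSq (v m) := by
    intro m _
    exact mul_nonneg (sq_nonneg _) (Complex.normSq_nonneg _)
  have hzero := (Finset.sum_eq_zero_iff_of_nonneg hnn).1 hQ'
  funext m
  have h := hzero m (Finset.mem_univ m)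
  rcases mul_eq_zero.1 h with h' | h'
  · exact absurd (pow_eq_zero_iff (by norm_num) |>.1 h') (hc m)
  · exact Complex.normSq_eq_zero.1 h'

lemma Bmat_anti {R : ℕ} (x c : Fin R → ℝ) (m n : Fin R) :
    Bmat x c n m = -(Bmat x c m n) := by
  simp only [Bmat, Matrix.of_apply]
  by_cases h : m = n
  · simp [h]
  · rw [if_neg (Ne.symm h), if_neg h, show x n - x m = -(x m - x n) by ring, div_neg, mul_comm]

lemma H_isHermitian {R : ℕ} (x c : Fin R → ℝ) :
    (Complex.I • ((Bmat x c).map (fun r => (r : ℂ)))).IsHermitian := by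
  rw [Matrix.IsHermitian]
  ext m n
  simp only [Matrix.conjTranspose_apply, Matrix.smul_apply, Matrix.map_apply, smul_eq_mul,
    star_mul', Complex.star_def, Complex.conj_I, Complex.conj_ofReal, Bmat_anti x c n m]
  push_cast
  ring

lemma A_mulVec_basis {R : ℕ} (x c : Fin R → ℝ)
    (hH : (Complex.I • ((Bmat x c).map (fun r => (r : ℂ)))).IsHermitian) (j : Fin R) :
    ((Bmat x c).map (fun r => (r : ℂ))) *ᵥ ⇑(hH.eigenvectorBasis j)
      = (-Complex.I * (hH.eigenvalues j : ℂ)) • ⇑(hH.eigenvectorBasis j) := by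
  set A : Matrix (Fin R) (Fin R) ℂ := (Bmat x c).map (fun r => (r : ℂ)) with hAdef
  have hAH : A = (-Complex.I) • (Complex.I • A) := by
    rw [smul_smul]
    norm_num [Complex.I_mul_I]
  have := hH.mulVec_eigenvectorBasis j
  calc A *ᵥ ⇑(hH.eigenvectorBasis j)
      = (-Complex.I) • ((Complex.I • A) *ᵥ ⇑(hH.eigenvectorBasis j)) := by
        rw [← Matrix.smul_mulVec, ← hAH]
    _ = (-Complex.I) • ((hH.eigenvalues j) • ⇑(hH.eigenvectorBasis j)) := by rw [this]
    _ = (-Complex.I * (hH.eigenvalues j : ℂ)) • ⇑(hH.eigenvectorBasis j) := by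
        funext i
        simp [Pi.smul_apply, Complex.real_smul, smul_eq_mul]
        ring

lemma eigs_injective {R : ℕ} (x c : Fin R → ℝ) (hx : Function.Injective x)
    (hc : ∀ n, c n ≠ 0)
    (hH : (Complex.I • ((Bmat x c).map (fun r => (r : ℂ)))).IsHermitian) :
    Function.Injective hH.eigenvalues := by
  intro j k h
  by_contra hne
  set u1 : Fin R → ℂ := ⇑(hH.eigenvectorBasis j) with hu1
  set u2 : Fin R → ℂ := ⇑(hH.eigenvectorBasis k) with hu2
  have horto : ∀ i i' : Fin R, ∑ m, (starRingEnd ℂ) (hH.eigenvectorBasis i m) *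
      (hH.eigenvectorBasis i' m) = if i = i' then 1 else 0 := by
    intro i i'
    have hh := orthonormal_iff_ite.mp hH.eigenvectorBasis.orthonormal i i'
    rw [← hh]
    simp [PiLp.inner_apply, RCLike.inner_apply]
    exact Finset.sum_congr rfl (fun _ _ => mul_comm _ _)
  have ho11 : ∑ m, (starRingEnd ℂ) (u1 m) * u1 m = 1 := by
    have hh := horto j j
    rw [if_pos rfl] at hh
    exact hh
  have ho21 : ∑ m, (starRingEnd ℂ) (u2 m) * u1 m = 0 := by
    have hh := horto k j
    rw [if_neg (fun hh2 => hne hh2.symm)] at hh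
    exact hh
  have ho22 : ∑ m, (starRingEnd ℂ) (u2 m) * u2 m = 1 := by
    have hh := horto k k
    rw [if_pos rfl] at hh
    exact hh
  set μ : ℂ := -Complex.I * (hH.eigenvalues j : ℂ) with hμdef
  have hμ : (starRingEnd ℂ) μ = -μ := by
    simp [hμdef, Complex.conj_ofReal]
  have heig1 : ((Bmat x c).map (fun r => (r : ℂ))) *ᵥ u1 = μ • u1 := A_mulVec_basis x c hH j
  have heig2 : ((Bmat x c).map (fun r => (r : ℂ))) *ᵥ u2 = μ • u2 := by
    rw [hμdef, h]
    exact A_mulVec_basis x c hH k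
  set a : ℂ := ∑ n, (c n : ℂ) * u1 n with hadef
  by_cases ha : a = 0
  · have := key_lemma x c hx hc μ hμ u1 heig1 (by rw [← hadef]; exact ha)
    rw [this] at ho11
    simp at ho11
  · set b : ℂ := ∑ n, (c n : ℂ) * u2 n with hbdef
    set v : Fin R → ℂ := fun m => b * u1 m - a * u2 m with hvdef
    have heigv : ((Bmat x c).map (fun r => (r : ℂ))) *ᵥ v = μ • v := by
      have : v = b • u1 - a • u2 := by funext m; simp [hvdef]
      rw [this, Matrix.mulVec_sub, Matrix.mulVec_smul, Matrix.mulVec_smul, heig1, heig2]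
      funext m
      simp [smul_eq_mul]
      ring
    have hcv : ∑ n, (c n : ℂ) * v n = 0 := by
      simp only [hvdef, mul_sub, Finset.sum_sub_distrib]
      have e1 : ∑ n, (c n : ℂ) * (b * u1 n) = b * a := by
        rw [hadef, Finset.mul_sum]
        exact Finset.sum_congr rfl (fun n _ => by ring)
      have e2 : ∑ n, (c n : ℂ) * (a * u2 n) = a * b := by
        rw [hbdef, Finset.mul_sum]
        exact Finset.sum_congr rfl (fun n _ => by ring)
      rw [e1, e2]
      ring
    have hv0 := key_lemma x c hx hc μ hμ v heigv hcv
    have hav : ∑ m, (starRingEnd ℂ) (u2 m) * v m = -a := by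
      simp only [hvdef, mul_sub, Finset.sum_sub_distrib]
      have e1 : ∑ m, (starRingEnd ℂ) (u2 m) * (b * u1 m) = b * 0 := by
        rw [← ho21, Finset.mul_sum]
        exact Finset.sum_congr rfl (fun m _ => by ring)
      have e2 : ∑ m, (starRingEnd ℂ) (u2 m) * (a * u2 m) = a * 1 := by
        rw [← ho22, Finset.mul_sum]
        exact Finset.sum_congr rfl (fun m _ => by ring)
      rw [e1, e2]
      ring
    rw [hv0] at hav
    simp at hav
    exact ha hav

set_option maxHeartbeats 1000000 in
/-- If all the `c_n` are nonzero, then the complex eigenvalues of `B(x,c)`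
(the roots of its characteristic polynomial over `ℂ`) are pairwise distinct:
there are `R` distinct eigenvalues. -/
theorem eigenvalues_distinct {R : ℕ} (x c : Fin R → ℝ)
    (hx : Function.Injective x) (hc : ∀ n, c n ≠ 0) :
    (((Bmat x c).map (fun r => (r : ℂ))).charpoly.roots).Nodup ∧
    (((Bmat x c).map (fun r => (r : ℂ))).charpoly.roots).toFinset.card = R := by
  set A : Matrix (Fin R) (Fin R) ℂ := (Bmat x c).map (fun r => (r : ℂ)) with hAdef
  have hH : (Complex.I • A).IsHermitian := H_isHermitian x c
  set U : Matrix (Fin R) (Fin R) ℂ := (Matrix.IsHermitian.eigenvectorUnitary hH : Matrix (Fin R) (Fin R) ℂ) with hUdef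
  set d : Fin R → ℂ := fun i => -Complex.I * (hH.eigenvalues i : ℂ) with hddef
  have hUV : U * star U = 1 :=
    Matrix.mem_unitaryGroup_iff.mp (Matrix.IsHermitian.eigenvectorUnitary hH).2
  have hspec := hH.spectral_theorem
  rw [Unitary.conjStarAlgAut_apply, ← hUdef] at hspec
  have hdiag : Matrix.diagonal d
      = (-Complex.I) • Matrix.diagonal (RCLike.ofReal ∘ hH.eigenvalues) := by
    ext i i'
    by_cases h : i = i'
    · subst h
      simp [hddef, RCLike.ofReal]
    · simp [Matrix.diagonal_apply_ne _ h]
  have hAeq : A = U * Matrix.diagonal d * star U := by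
    rw [hdiag, Matrix.mul_smul, Matrix.smul_mul, ← hspec, smul_smul]
    norm_num [Complex.I_mul_I]
  have hcp : A.charpoly = ∏ i, (X - C (d i)) := by
    rw [hAeq, charpoly_conj_aux U (star U) _ hUV, charpoly_diagonal']
  have hroots : A.charpoly.roots = Finset.univ.val.map d := by
    rw [hcp]
    have : ∏ i, (X - C (d i)) = ((Finset.univ.val.map d).map (fun a => X - C a)).prod := by
      rw [Multiset.map_map]
      rfl
    rw [this, Polynomial.roots_multiset_prod_X_sub_C]
  have hdinj : Function.Injective d := by
    intro i i' h
    apply eigs_injective x c hx hc hH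
    have h2 : ((hH.eigenvalues i : ℂ)) = (hH.eigenvalues i' : ℂ) := by
      have hI : (-Complex.I) ≠ 0 := by simp [Complex.I_ne_zero]
      exact mul_left_cancel₀ hI h
    exact_mod_cast h2
  have hnodup : (Finset.univ.val.map d).Nodup := Finset.univ.nodup.map hdinj
  constructor
  · rw [hroots]; exact hnodup
  · rw [hroots, Multiset.toFinset_card_eq_card_iff_nodup.mpr hnodup, Multiset.card_map]
    simp
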